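/- Let θ ∈ (0,π/2), λ ≥ 1, a,b ∈ ℝ, and for δ ≥ 0 let p*_δ(x,y) = λ·(φ(x)φ(y)/Φ(δ))·1_{ℝ₊}(δ − x cos θ − y sin θ)·F₁,δ(x)^{λ−1} be the selected-step density. Then lim_{δ→+∞} ∫∫ exp(ax + by)·p*_δ(x,y) dx dy = E[exp(a·N^{(λ)})]·E[exp(b·N)] < ∞, where N^{(λ)} is the maximum of λ i.i.d. standard normals and N is standard normal. -/

import Mathlib

open MeasureTheory ProbabilityTheory Real Set Filter
open Topology

noncomputable def phi (x : ℝ) : ℝ := Real.exp (-x^2/2) / Real.sqrt (2*Real.pi)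
noncomputable def Phi (x : ℝ) : ℝ := ∫ u in Set.Iic x, phi u
noncomputable def pdelta (θ δ : ℝ) (z : ℝ × ℝ) : ℝ :=
  phi z.1 * phi z.2 * Set.indicator (Set.Ici (0:ℝ)) (fun _ => 1)
    (δ - z.1 * Real.cos θ - z.2 * Real.sin θ) / Phi δ
noncomputable def p1 (θ δ x : ℝ) : ℝ :=
  phi x * Phi ((δ - x * Real.cos θ) / Real.sin θ) / Phi δ
noncomputable def F1 (θ δ x : ℝ) : ℝ := ∫ u in Set.Iic x, p1 θ δ u
noncomputable def pstar (lam : ℕ) (θ δ : ℝ) (z : ℝ × ℝ) : ℝ :=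
  (lam : ℝ) * pdelta θ δ z * F1 θ δ z.1 ^ (lam - 1)
noncomputable def p1star (lam : ℕ) (θ δ x : ℝ) : ℝ :=
  (lam : ℝ) * p1 θ δ x * F1 θ δ x ^ (lam - 1)
noncomputable def p2star (lam : ℕ) (θ δ y : ℝ) : ℝ :=
  (lam : ℝ) * (phi y / Phi δ) *
    ∫ u in Set.Iic ((δ - y * Real.sin θ) / Real.cos θ), phi u * F1 θ δ u ^ (lam - 1)



lemma phi_pos (x : ℝ) : 0 < phi x := by
  have := Real.pi_pos
  unfold phi; positivity

lemma phi_nonneg (x : ℝ) : 0 ≤ phi x := (phi_pos x).le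

lemma integrable_phi : Integrable phi := by
  have h : phi = fun x => Real.exp (-(1/2) * x^2) / Real.sqrt (2*Real.pi) := by
    funext x; unfold phi; ring_nf
  rw [h]
  exact (integrable_exp_neg_mul_sq (by norm_num)).div_const _

lemma integral_phi : ∫ x, phi x = 1 := by
  unfold phi
  rw [integral_div]
  have h : (fun x : ℝ => Real.exp (-x^2/2)) = fun x => Real.exp (-(1/2) * x^2) := by
    funext x; ring_nf
  rw [h, integral_gaussian]
  rw [div_eq_one_iff_eq (by positivity : Real.sqrt (2*Real.pi) ≠ 0)]
  norm_num
  exact mul_comm _ _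

lemma Phi_nonneg (x : ℝ) : 0 ≤ Phi x :=
  setIntegral_nonneg measurableSet_Iic fun u _ => phi_nonneg u

lemma Phi_le_one (x : ℝ) : Phi x ≤ 1 := by
  rw [← integral_phi]
  exact setIntegral_le_integral integrable_phi (ae_of_all _ phi_nonneg)

lemma Phi_mono : Monotone Phi := fun u v h =>
  setIntegral_mono_set integrable_phi.integrableOn (ae_of_all _ phi_nonneg)
    (HasSubset.Subset.eventuallyLE (Iic_subset_Iic.2 h))

lemma measurable_Phi : Measurable Phi := Phi_mono.measurable

lemma Phi_pos (x : ℝ) : 0 < Phi x := by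
  rw [Phi, setIntegral_pos_iff_support_of_nonneg_ae
    (ae_of_all _ fun u => phi_nonneg u) integrable_phi.integrableOn]
  have : Function.support phi = univ := by
    ext u; simp [Function.mem_support, (phi_pos u).ne']
  rw [this, univ_inter]
  simp [Real.volume_Iic]

lemma tendsto_Phi : Tendsto Phi atTop (𝓝 1) := by
  have h := tendsto_setIntegral_of_monotone (μ := volume) (f := phi)
    (s := fun δ : ℝ => Iic δ) (fun _ => measurableSet_Iic)
    (fun u v h => Iic_subset_Iic.2 h) (by rw [iUnion_Iic]; exact integrable_phi.integrableOn)
  rwa [iUnion_Iic, Measure.restrict_univ, integral_phi] at h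

lemma integrable_exp_mul_phi (a : ℝ) : Integrable (fun x => Real.exp (a*x) * phi x) := by
  have h : (fun x => Real.exp (a*x) * phi x)
      = fun x => (Real.exp (a^2/2) / Real.sqrt (2*Real.pi)) * Real.exp (-(1/2) * (x-a)^2) := by
    funext x
    unfold phi
    rw [mul_div_assoc', ← Real.exp_add, div_mul_eq_mul_div, ← Real.exp_add]
    ring_nf
  rw [h]
  exact (((integrable_exp_neg_mul_sq (by norm_num : (0:ℝ) < 1/2)).comp_sub_right a)).const_mul _

lemma continuous_phi : Continuous phi := by
  unfold phi; fun_prop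

lemma p1_nonneg (θ δ x : ℝ) : 0 ≤ p1 θ δ x :=
  div_nonneg (mul_nonneg (phi_nonneg x) (Phi_nonneg _)) (Phi_nonneg δ)

lemma p1_le (θ δ x : ℝ) : p1 θ δ x ≤ phi x / Phi δ := by
  unfold p1
  gcongr
  · exact (Phi_nonneg δ)
  · nlinarith [phi_nonneg x, Phi_le_one ((δ - x * Real.cos θ) / Real.sin θ),
      Phi_nonneg ((δ - x * Real.cos θ) / Real.sin θ)]

lemma measurable_p1 (θ δ : ℝ) : Measurable (p1 θ δ) := by
  unfold p1
  exact ((continuous_phi.measurable).mul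
    (measurable_Phi.comp (((measurable_const.sub (measurable_id.mul_const _)).div_const _)))).div_const _

lemma integrable_p1 (θ δ : ℝ) : Integrable (p1 θ δ) := by
  have h : p1 θ δ = fun x => (Phi ((δ - x * Real.cos θ) / Real.sin θ) / Phi δ) * phi x := by
    funext x; unfold p1; ring
  rw [h]
  refine integrable_phi.bdd_mul (c := 1 / Phi δ) ?_ (ae_of_all _ fun x => ?_)
  · exact ((measurable_Phi.comp (((measurable_const.sub
      (measurable_id.mul_const _)).div_const _))).div_const _).aestronglyMeasurable
  · rw [Real.norm_eq_abs, abs_of_nonneg (div_nonneg (Phi_nonneg _) (Phi_nonneg _))]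
    gcongr
    · exact Phi_nonneg δ
    · exact Phi_le_one _

lemma F1_nonneg (θ δ x : ℝ) : 0 ≤ F1 θ δ x :=
  setIntegral_nonneg measurableSet_Iic fun u _ => p1_nonneg θ δ u

lemma F1_mono (θ δ : ℝ) : Monotone (F1 θ δ) := fun u v h =>
  setIntegral_mono_set (integrable_p1 θ δ).integrableOn
    (ae_of_all _ (p1_nonneg θ δ)) (HasSubset.Subset.eventuallyLE (Iic_subset_Iic.2 h))

lemma measurable_F1 (θ δ : ℝ) : Measurable (F1 θ δ) := (F1_mono θ δ).measurable

lemma F1_le (θ δ x : ℝ) : F1 θ δ x ≤ 1 / Phi δ := by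
  have h1 : F1 θ δ x ≤ ∫ u in Iic x, phi u / Phi δ := by
    refine setIntegral_mono_on (integrable_p1 θ δ).integrableOn
      (integrable_phi.div_const _).integrableOn measurableSet_Iic fun u _ => p1_le θ δ u
  have h2 : ∫ u in Iic x, phi u / Phi δ = Phi x / Phi δ := by
    rw [integral_div]; rfl
  rw [h2] at h1
  refine h1.trans ?_
  gcongr
  · exact Phi_nonneg δ
  · exact Phi_le_one x

lemma tendsto_F1 {θ : ℝ} (hs : 0 < Real.sin θ) (x : ℝ) :
    Tendsto (fun δ => F1 θ δ x) atTop (𝓝 (Phi x)) := by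
  have h := tendsto_integral_filter_of_dominated_convergence
    (μ := volume.restrict (Iic x)) (l := (atTop : Filter ℝ)) (F := fun δ u => p1 θ δ u) (f := phi)
    (fun u => phi u / Phi 0)
    (Eventually.of_forall fun δ => (measurable_p1 θ δ).aestronglyMeasurable)
    ?_ ((integrable_phi.div_const _).integrableOn) ?_
  · exact h
  · filter_upwards [eventually_ge_atTop (0:ℝ)] with δ hδ
    refine ae_of_all _ fun u => ?_
    rw [Real.norm_eq_abs, abs_of_nonneg (p1_nonneg θ δ u)]
    refine (p1_le θ δ u).trans ?_
    gcongr
    · exact phi_nonneg u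
    · exact Phi_pos 0
    · exact Phi_mono hδ
  · refine ae_of_all _ fun u => ?_
    have haff : Tendsto (fun δ => (δ - u * Real.cos θ) / Real.sin θ) atTop atTop := by
      apply Tendsto.atTop_div_const hs
      simpa [sub_eq_add_neg] using
        tendsto_atTop_add_const_right atTop (-(u * Real.cos θ)) tendsto_id
    have h1 : Tendsto (fun δ => Phi ((δ - u * Real.cos θ) / Real.sin θ)) atTop (𝓝 1) :=
      tendsto_Phi.comp haff
    have h2 := (tendsto_const_nhds (x := phi u) (f := atTop)).mul h1 |>.div tendsto_Phi one_ne_zero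
    simp only [mul_one, div_one] at h2
    exact h2

lemma ind_nonneg (t : ℝ) : 0 ≤ Set.indicator (Set.Ici (0:ℝ)) (fun _ => (1:ℝ)) t := by
  by_cases h : t ∈ Set.Ici (0:ℝ) <;> simp [h]

lemma ind_le_one (t : ℝ) : Set.indicator (Set.Ici (0:ℝ)) (fun _ => (1:ℝ)) t ≤ 1 := by
  by_cases h : t ∈ Set.Ici (0:ℝ) <;> simp [h]

lemma pdelta_nonneg (θ δ : ℝ) (z : ℝ × ℝ) : 0 ≤ pdelta θ δ z :=
  div_nonneg (mul_nonneg (mul_nonneg (phi_nonneg _) (phi_nonneg _)) (ind_nonneg _))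
    (Phi_nonneg δ)

lemma pdelta_le (θ δ : ℝ) (z : ℝ × ℝ) : pdelta θ δ z ≤ phi z.1 * phi z.2 / Phi δ := by
  unfold pdelta
  apply (div_le_div_iff_of_pos_right (Phi_pos δ)).2
  nlinarith [mul_nonneg (phi_nonneg z.1) (phi_nonneg z.2),
      ind_le_one (δ - z.1 * Real.cos θ - z.2 * Real.sin θ),
      ind_nonneg (δ - z.1 * Real.cos θ - z.2 * Real.sin θ)]


/-- the exponential moment of the selected step converges, as
δ → +∞, to E[exp(a N^{(λ)})] · E[exp(b N)], which is finite. -/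
theorem stmt12 (lam : ℕ) (hlam : 1 ≤ lam) (θ : ℝ)
    (hθ : θ ∈ Set.Ioo 0 (Real.pi/2)) (a b : ℝ) :
    Filter.Tendsto
      (fun δ => ∫ z : ℝ × ℝ, Real.exp (a * z.1 + b * z.2) * pstar lam θ δ z)
      Filter.atTop
      (nhds ((∫ x : ℝ, Real.exp (a * x) * ((lam : ℝ) * phi x * Phi x ^ (lam - 1)))
        * (∫ y : ℝ, Real.exp (b * y) * phi y))) := by
  obtain ⟨hθ0, hθ2⟩ := hθ
  have hpi := Real.pi_pos
  have hsin : 0 < Real.sin θ := Real.sin_pos_of_pos_of_lt_pi hθ0 (by linarith)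
  set C : ℝ := 1 / Phi 0 with hCdef
  have hC0 : 0 < C := one_div_pos.2 (Phi_pos 0)
  have key := tendsto_integral_filter_of_dominated_convergence
    (μ := (volume : Measure (ℝ × ℝ))) (l := (atTop : Filter ℝ))
    (F := fun δ z => Real.exp (a * z.1 + b * z.2) * pstar lam θ δ z)
    (f := fun z : ℝ × ℝ => Real.exp (a * z.1 + b * z.2) *
      ((lam : ℝ) * (phi z.1 * phi z.2) * Phi z.1 ^ (lam - 1)))
    (fun z : ℝ × ℝ => (lam : ℝ) * C ^ (lam - 1) * C *
      (Real.exp (a * z.1) * phi z.1 * (Real.exp (b * z.2) * phi z.2)))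
    ?_ ?_ ?_ ?_
  · -- rewrite the limit integral as a product
    have heq : (∫ z : ℝ × ℝ, Real.exp (a * z.1 + b * z.2) *
          ((lam : ℝ) * (phi z.1 * phi z.2) * Phi z.1 ^ (lam - 1)))
        = (∫ x : ℝ, Real.exp (a * x) * ((lam : ℝ) * phi x * Phi x ^ (lam - 1)))
          * (∫ y : ℝ, Real.exp (b * y) * phi y) := by
      have hz : ∀ z : ℝ × ℝ, Real.exp (a * z.1 + b * z.2) *
            ((lam : ℝ) * (phi z.1 * phi z.2) * Phi z.1 ^ (lam - 1))
          = (fun x => Real.exp (a * x) * ((lam : ℝ) * phi x * Phi x ^ (lam - 1))) z.1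
            * (fun y => Real.exp (b * y) * phi y) z.2 := by
        intro z; simp only; rw [Real.exp_add]; ring
      simp_rw [hz]
      rw [Measure.volume_eq_prod]
      exact integral_prod_mul (fun x => Real.exp (a * x) * ((lam : ℝ) * phi x * Phi x ^ (lam - 1))) (fun y => Real.exp (b * y) * phi y)
    rw [← heq]
    exact key
  · -- measurability
    refine Eventually.of_forall fun δ => Measurable.aestronglyMeasurable ?_
    refine Measurable.mul ?_ ?_
    · exact (Real.continuous_exp.comp ((continuous_const.mul continuous_fst).add
        (continuous_const.mul continuous_snd))).measurable
    · unfold pstar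
      refine Measurable.mul (Measurable.mul measurable_const ?_) ?_
      · unfold pdelta
        refine Measurable.div_const ?_ _
        refine Measurable.mul ?_ ?_
        · exact (continuous_phi.measurable.comp measurable_fst).mul
            (continuous_phi.measurable.comp measurable_snd)
        · exact (measurable_const.indicator measurableSet_Ici).comp
            ((measurable_const.sub (measurable_fst.mul_const _)).sub
              (measurable_snd.mul_const _))
      · exact ((measurable_F1 θ δ).comp measurable_fst).pow_const _
  · -- bound
    filter_upwards [eventually_ge_atTop (0:ℝ)] with δ hδ
    refine ae_of_all _ fun z => ?_
    have hCδ : 1 / Phi δ ≤ C := one_div_le_one_div_of_le (Phi_pos 0) (Phi_mono hδ)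
    have h1 : pdelta θ δ z ≤ phi z.1 * phi z.2 * C := by
      refine (pdelta_le θ δ z).trans ?_
      rw [div_eq_mul_one_div]
      exact mul_le_mul_of_nonneg_left hCδ
        (mul_nonneg (phi_nonneg _) (phi_nonneg _))
    have h2 : F1 θ δ z.1 ^ (lam - 1) ≤ C ^ (lam - 1) :=
      pow_le_pow_left₀ (F1_nonneg θ δ z.1) ((F1_le θ δ z.1).trans hCδ) _
    have hpstar : pstar lam θ δ z ≤ (lam : ℝ) * C ^ (lam - 1) * C * (phi z.1 * phi z.2) := by
      unfold pstar
      calc (lam : ℝ) * pdelta θ δ z * F1 θ δ z.1 ^ (lam - 1)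
          ≤ (lam : ℝ) * (phi z.1 * phi z.2 * C) * C ^ (lam - 1) := by
            refine mul_le_mul (mul_le_mul_of_nonneg_left h1 (Nat.cast_nonneg _)) h2
              (pow_nonneg (F1_nonneg θ δ z.1) _) ?_
            have := phi_nonneg z.1; have := phi_nonneg z.2
            positivity
        _ = (lam : ℝ) * C ^ (lam - 1) * C * (phi z.1 * phi z.2) := by ring
    have hnn : 0 ≤ pstar lam θ δ z := by
      unfold pstar
      exact mul_nonneg (mul_nonneg (Nat.cast_nonneg _) (pdelta_nonneg θ δ z))
        (pow_nonneg (F1_nonneg θ δ z.1) _)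
    rw [Real.norm_eq_abs, abs_of_nonneg (mul_nonneg (Real.exp_pos _).le hnn)]
    have hb : (lam : ℝ) * C ^ (lam - 1) * C *
        (Real.exp (a * z.1) * phi z.1 * (Real.exp (b * z.2) * phi z.2))
        = Real.exp (a * z.1 + b * z.2) *
          ((lam : ℝ) * C ^ (lam - 1) * C * (phi z.1 * phi z.2)) := by
      rw [Real.exp_add]; ring
    rw [hb]
    exact mul_le_mul_of_nonneg_left hpstar (Real.exp_pos _).le
  · -- integrability of the bound
    have := (((integrable_exp_mul_phi a).const_mul ((lam : ℝ) * C ^ (lam - 1) * C)).mul_prod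
      (integrable_exp_mul_phi b))
    rw [← Measure.volume_eq_prod] at this
    refine this.congr (ae_of_all _ fun z => ?_)
    simp only
    ring
  · -- pointwise convergence
    refine ae_of_all _ fun z => ?_
    have hpd : Tendsto (fun δ => pdelta θ δ z) atTop (𝓝 (phi z.1 * phi z.2)) := by
      have hev : (fun δ => phi z.1 * phi z.2 / Phi δ) =ᶠ[atTop] fun δ => pdelta θ δ z := by
        filter_upwards [eventually_ge_atTop (z.1 * Real.cos θ + z.2 * Real.sin θ)] with δ hδ
        unfold pdelta
        rw [Set.indicator_of_mem (by simp only [Set.mem_Ici]; linarith), mul_one]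
      have h := (tendsto_const_nhds (x := phi z.1 * phi z.2)
        (f := (atTop : Filter ℝ))).div tendsto_Phi one_ne_zero
      rw [div_one] at h
      exact h.congr' hev
    have hF : Tendsto (fun δ => F1 θ δ z.1 ^ (lam - 1)) atTop (𝓝 (Phi z.1 ^ (lam - 1))) :=
      (tendsto_F1 hsin z.1).pow _
    have : Tendsto (fun δ => Real.exp (a * z.1 + b * z.2) * pstar lam θ δ z) atTop
        (𝓝 (Real.exp (a * z.1 + b * z.2) *
          ((lam : ℝ) * (phi z.1 * phi z.2) * Phi z.1 ^ (lam - 1)))) := by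
      unfold pstar
      exact tendsto_const_nhds.mul ((tendsto_const_nhds.mul hpd).mul hF)
    exact this
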